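/- Let K ≥ 2 and M, N > 0 with M/N ∈ (1, K). Let Ψ be the nonempty subsets of [K] and f ∈ ℝ₊^Ψ be nonzero. Define τ_u = max over constraints of D̄₂ (the region D₂ with indicator functions removed) evaluated at f, and τ_l = max{ (∑_{A∈Ψ} f(A))/M, max_i (∑_{A ∋ i} f(A))/N }. Then τ_u / τ_l ≤ M/N. -/

import Mathlib

theorem ndt_multiplicative_gap (K : ℕ) (hK : 2 ≤ K) (M N : ℝ)
    (hN : 0 < N) (h1 : N < M) (h2 : M < K * N)
    (f : Finset (Fin K) → ℝ) (hf : ∀ A, 0 ≤ f A)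
    (hf0 : ∃ A : Finset (Fin K), A.Nonempty ∧ 0 < f A)
    (Ftot : ℝ)
    (hFtot : Ftot = ∑ A ∈ Finset.univ.powerset.filter
      (fun A : Finset (Fin K) => A.Nonempty), f A)
    (τl τu : ℝ)
    (hτl : IsGreatest {r : ℝ | r = Ftot / M ∨ ∃ i : Fin K,
      r = (∑ A ∈ Finset.univ.powerset.filter
        (fun A : Finset (Fin K) => i ∈ A), f A) / N} τl)
    (hτu : IsGreatest {r : ℝ |
      (∃ i : Fin K, r = (∑ A ∈ Finset.univ.powerset.filter
        (fun A : Finset (Fin K) => i ∈ A), f A) / N) ∨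
      r = Ftot / M ∨
      (∃ A : Finset (Fin K), 2 ≤ A.card ∧
        r = (((A.card : ℝ) - 1) * Ftot + f A +
          ∑ B ∈ Finset.univ.powerset.filter
            (fun B : Finset (Fin K) => A ⊂ B), f B) / ((A.card : ℝ) * N))} τu) :
    τu / τl ≤ M / N := by
  obtain ⟨A0, hA0ne, hA0pos⟩ := hf0
  have hM : 0 < M := lt_trans hN h1
  have hFpos : 0 < Ftot := by
    rw [hFtot]
    have hmem : A0 ∈ Finset.univ.powerset.filter
        (fun A : Finset (Fin K) => A.Nonempty) := by
      simp [hA0ne]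
    exact lt_of_lt_of_le hA0pos (Finset.single_le_sum (fun a _ => hf a) hmem)
  have hτlF : Ftot / M ≤ τl := hτl.2 (Or.inl rfl)
  have hτl_pos : 0 < τl := lt_of_lt_of_le (div_pos hFpos hM) hτlF
  have hMN : 1 ≤ M / N := le_of_lt ((one_lt_div hN).2 h1)
  have hMNpos : 0 < M / N := div_pos hM hN
  have key : τu ≤ M / N * τl := by
    rcases hτu.1 with ⟨i, hr⟩ | hr | ⟨A, hc, hr⟩
    · have h1' : τu ≤ τl := hτl.2 (Or.inr ⟨i, hr⟩)
      nlinarith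
    · have h1' : τu ≤ τl := hτl.2 (Or.inl hr)
      nlinarith
    · have hAne : A.Nonempty := Finset.card_pos.mp (by omega)
      have hS : f A + ∑ B ∈ Finset.univ.powerset.filter
          (fun B : Finset (Fin K) => A ⊂ B), f B ≤ Ftot := by
        rw [hFtot]
        have hAnot : A ∉ Finset.univ.powerset.filter
            (fun B : Finset (Fin K) => A ⊂ B) := by
          simp only [Finset.mem_filter]; exact fun h => (ssubset_irrefl A) h.2
        rw [← Finset.sum_insert hAnot]
        apply Finset.sum_le_sum_of_subset_of_nonneg
        · intro B hB
          simp only [Finset.mem_insert, Finset.mem_filter, Finset.mem_powerset] at hB ⊢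
          refine ⟨Finset.subset_univ _, ?_⟩
          rcases hB with rfl | ⟨_, hAB⟩
          · exact hAne
          · exact hAne.mono hAB.subset
        · intro B _ _
          exact hf B
      have hc2 : (2 : ℝ) ≤ (A.card : ℝ) := by exact_mod_cast hc
      have hcpos : (0 : ℝ) < (A.card : ℝ) := by linarith
      have hnum : ((A.card : ℝ) - 1) * Ftot + f A +
          ∑ B ∈ Finset.univ.powerset.filter
            (fun B : Finset (Fin K) => A ⊂ B), f B ≤ (A.card : ℝ) * Ftot := by
        nlinarith
      have hle : τu ≤ Ftot / N := by
        rw [hr]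
        calc (((A.card : ℝ) - 1) * Ftot + f A +
            ∑ B ∈ Finset.univ.powerset.filter
              (fun B : Finset (Fin K) => A ⊂ B), f B) / ((A.card : ℝ) * N)
            ≤ ((A.card : ℝ) * Ftot) / ((A.card : ℝ) * N) := by
              apply div_le_div_of_nonneg_right hnum -- may need different lemma
              positivity
          _ = Ftot / N := mul_div_mul_left _ _ (ne_of_gt hcpos)
      have : Ftot / N = M / N * (Ftot / M) := by
        field_simp
      rw [this] at hle
      calc τu ≤ M / N * (Ftot / M) := hle
        _ ≤ M / N * τl := by nlinarith
  rw [div_le_iff₀ hτl_pos]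
  linarith [key]
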